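/- With the lifting setup below, regard each Eisenbud operator as a morphism t̂_k : C → Σ²C and ŝ_k : D → Σ²D in the homotopy category K(R) of complexes of R-modules (where Σ denotes the shift functor). Then precomposition with t̂_k and postcomposition with ŝ_k induce the same action on homotopy classes of maps from C into shifts of D: for every integer j and every morphism α : C → Σ^j D in K(R), one has (Σ^j ŝ_k)∘α = (Σ²α)∘t̂_k as morphisms C → Σ^{j+2}D in K(R). -/

import Mathlib

/-!
Statement 7: in the homotopy category `K(R)`, the actions of the Eisenbud operators
`t̂_k : C → Σ²C` and `ŝ_k : D → Σ²D` on maps from `C` into shifts of `D` agree: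
for every morphism `α : C → Σʲ D` one has `(Σʲ ŝ_k) ∘ α = (Σ²α) ∘ t̂_k` in `K(R)`.

Conventions (following the paper): the shift `Σʲ` has `(Σʲ D)_n = D_{n−j}` and
differential `(−1)ʲ d`.  A morphism `C → Σʲ D` in `K(R)` is represented by a family of
`R`-linear maps `α_n : C_{n+j} → D_n` with `α ∘ d_C = (−1)ʲ d_D ∘ α`, and two such
morphisms are equal in `K(R)` iff they differ by `(−1)ʲ d_D ∘ λ + λ ∘ d_C` for a family
`λ` of maps of degree one higher.

A complex over `R = Q/(f₁,…,f_c)` with a lift is encoded by finitely generated free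
`Q`-modules with maps `d̃`, `t̃_k` satisfying `d̃ ∘ d̃ = Σ f_k • t̃_k`; the `R`-complex
has modules `R ⊗[Q] C̃_n`, differential `d̃ ⊗ R` and Eisenbud operators `t̃_k ⊗ R`.
-/

open TensorProduct

/-- The quotient ring `R = Q/(f₁,…,f_c)`. -/
abbrev Rquot (Q : Type) [CommRing Q] {c : ℕ} (f : Fin c → Q) : Type :=
  Q ⧸ Ideal.span (Set.range f)

/-- Transport along an equality of indices (the identity map). -/
def lcast (Q : Type) [CommRing Q] {c : ℕ} (f : Fin c → Q)
    (Ct : ℤ → Type) [∀ n, AddCommGroup (Ct n)] [∀ n, Module Q (Ct n)]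
    {a b : ℤ} (h : a = b) :
    (Rquot Q f ⊗[Q] Ct a) →ₗ[Rquot Q f] (Rquot Q f ⊗[Q] Ct b) := by
  subst h; exact LinearMap.id

namespace EisenbudAux

variable {Q : Type} [CommRing Q] {c : ℕ} {f : Fin c → Q}

/-- transport at the `Q`-level -/
def qcast (Q : Type) [CommRing Q] (Ct : ℤ → Type) [∀ n, AddCommGroup (Ct n)]
    [∀ n, Module Q (Ct n)] {a b : ℤ} (h : a = b) : Ct a →ₗ[Q] Ct b := by
  subst h; exact LinearMap.id

lemma qcast_natural {Ct : ℤ → Type} [∀ n, AddCommGroup (Ct n)] [∀ n, Module Q (Ct n)]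
    (g : ∀ n : ℤ, Ct (n + 1) →ₗ[Q] Ct n) {a b : ℤ} (h : a = b) (h' : a + 1 = b + 1)
    (x : Ct (a + 1)) :
    qcast Q Ct h (g a x) = g b (qcast Q Ct h' x) := by
  subst h; rfl

lemma qcast_qcast {Ct : ℤ → Type} [∀ n, AddCommGroup (Ct n)] [∀ n, Module Q (Ct n)]
    {a b d : ℤ} (h1 : a = b) (h2 : b = d) (x : Ct a) :
    qcast Q Ct h2 (qcast Q Ct h1 x) = qcast Q Ct (h1.trans h2) x := by
  subst h1; subst h2; rfl

lemma baseChange_qcast (f : Fin c → Q) (Ct : ℤ → Type) [∀ n, AddCommGroup (Ct n)]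
    [∀ n, Module Q (Ct n)] {a b : ℤ} (h : a = b) :
    (qcast Q Ct h).baseChange (Rquot Q f) = lcast Q f Ct h := by
  subst h
  rw [show qcast Q Ct rfl = LinearMap.id from rfl, LinearMap.baseChange_id]
  rfl

variable (Q f) in
abbrev Ispan : Ideal Q := Ideal.span (Set.range f)

section M
variable {M : Type} [AddCommGroup M] [Module Q M]

lemma one_tmul_eq_zero_iff (f : Fin c → Q) (x : M) :
    (1 ⊗ₜ[Q] x : Rquot Q f ⊗[Q] M) = 0 ↔ x ∈ Ispan Q f • (⊤ : Submodule Q M) := by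
  set e := TensorProduct.quotTensorEquivQuotSMul M (Ispan Q f)
  have he : e (1 ⊗ₜ[Q] x) = Submodule.Quotient.mk x := by
    have h := TensorProduct.quotTensorEquivQuotSMul_mk_tmul (M := M) (Ispan Q f) 1 x
    simpa [e] using h
  rw [← e.map_eq_zero_iff, he, Submodule.Quotient.mk_eq_zero]

lemma red_surjective (f : Fin c → Q) :
    Function.Surjective (TensorProduct.mk Q (Rquot Q f) M 1) := by
  intro t
  set e := TensorProduct.quotTensorEquivQuotSMul M (Ispan Q f)
  obtain ⟨y, hy⟩ := Submodule.Quotient.mk_surjective _ (e t)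
  refine ⟨y, e.injective ?_⟩
  have he : e (1 ⊗ₜ[Q] y) = Submodule.Quotient.mk y := by
    have h := TensorProduct.quotTensorEquivQuotSMul_mk_tmul (M := M) (Ispan Q f) 1 y
    simpa [e] using h
  simpa [he] using hy

/-- extensionality for `R`-linear maps out of `R ⊗[Q] M` -/
lemma rext {P : Type} [AddCommGroup P] [Module (Rquot Q f) P]
    (F G : (Rquot Q f ⊗[Q] M) →ₗ[Rquot Q f] P)
    (h : ∀ x : M, F (1 ⊗ₜ[Q] x) = G (1 ⊗ₜ[Q] x)) : F = G := by
  apply LinearMap.ext; intro t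
  induction t using TensorProduct.induction_on with
  | zero => simp
  | tmul r m =>
    have hr : (r ⊗ₜ[Q] m : Rquot Q f ⊗[Q] M) = r • (1 ⊗ₜ[Q] m) := by
      rw [TensorProduct.smul_tmul', smul_eq_mul, mul_one]
    rw [hr, map_smul, map_smul, h]
  | add a b ha hb => rw [map_add, map_add, ha, hb]

end M

section MN

variable {M N : Type} [AddCommGroup M] [Module Q M] [AddCommGroup N] [Module Q N]

lemma one_tmul_smul (e : ℤ) (y : N) :
    ((1 : Rquot Q f) ⊗ₜ[Q] (e • y) : Rquot Q f ⊗[Q] N) = e • (1 ⊗ₜ[Q] y) :=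
  map_zsmul (TensorProduct.mk Q (Rquot Q f) N 1) e y

lemma baseChange_eq_zero_of_mem (g : M →ₗ[Q] N)
    (hg : ∀ x : M, g x ∈ Ispan Q f • (⊤ : Submodule Q N)) :
    g.baseChange (Rquot Q f) = 0 := by
  apply rext
  intro x
  rw [LinearMap.baseChange_tmul, LinearMap.zero_apply,
    one_tmul_eq_zero_iff f (g x)]
  exact hg x

lemma exists_lift (hM : Module.Projective Q M)
    (β : (Rquot Q f ⊗[Q] M) →ₗ[Rquot Q f] (Rquot Q f ⊗[Q] N)) :
    ∃ g : M →ₗ[Q] N, g.baseChange (Rquot Q f) = β := by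
  haveI := hM
  obtain ⟨g, hg⟩ := Module.projective_lifting_property
    (TensorProduct.mk Q (Rquot Q f) N 1)
    ((β.restrictScalars Q).comp ((TensorProduct.mk Q (Rquot Q f) M) 1))
    (red_surjective f)
  refine ⟨g, rext _ _ fun x => ?_⟩
  have hx := congrArg (fun (h : M →ₗ[Q] (Rquot Q f ⊗[Q] N)) => h x) hg
  simp only [LinearMap.coe_comp, Function.comp_apply, LinearMap.restrictScalars_apply,
    TensorProduct.mk_apply] at hx
  rw [LinearMap.baseChange_tmul, hx]

end MN

end EisenbudAux

namespace EisenbudAux2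
open EisenbudAux

variable {Q : Type} [CommRing Q] {c : ℕ} (f : Fin c → Q)

variable (Q) in
def Jid (f : Fin c → Q) (i : ℕ) : Ideal Q := Ideal.span (f '' {k : Fin c | (k : ℕ) < i})

noncomputable def phi (N : Type) [AddCommGroup N] [Module Q N] (i : ℕ) :
    (Fin c → N) →ₗ[Q] N :=
  ∑ k ∈ Finset.univ.filter (fun k : Fin c => (k : ℕ) < i), f k • LinearMap.proj k

lemma phi_apply {N : Type} [AddCommGroup N] [Module Q N] (i : ℕ) (y : Fin c → N) :
    phi f N i y = ∑ k ∈ Finset.univ.filter (fun k : Fin c => (k : ℕ) < i), f k • y k := by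
  simp [phi]

lemma Jid_mono {i i' : ℕ} (h : i ≤ i') : Jid Q f i ≤ Jid Q f i' :=
  Ideal.span_mono (Set.image_mono fun k hk => lt_of_lt_of_le hk h)

lemma range_phi (N : Type) [AddCommGroup N] [Module Q N] (i : ℕ) :
    LinearMap.range (phi f N i) = Jid Q f i • (⊤ : Submodule Q N) := by
  apply le_antisymm
  · rintro _ ⟨v, rfl⟩
    rw [phi_apply]
    refine Submodule.sum_mem _ fun k hk => ?_
    refine Submodule.smul_mem_smul ?_ trivial
    exact Ideal.subset_span ⟨k, by simpa using hk, rfl⟩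
  · refine Submodule.smul_le.2 fun a ha n _ => ?_
    induction ha using Submodule.span_induction with
    | mem r hr =>
      obtain ⟨k, hk, rfl⟩ := hr
      refine ⟨Pi.single k n, ?_⟩
      rw [phi_apply]
      rw [Finset.sum_eq_single k]
      · simp
      · intro k' _ hk'
        simp [Pi.single_eq_of_ne hk']
      · intro h; exact absurd (by simpa using hk) (by simpa using h)
    | zero => simpa using Submodule.zero_mem _
    | add a b _ _ ha hb =>
      rw [add_smul]; exact Submodule.add_mem _ ha hb
    | smul q a _ ha =>
      rw [smul_assoc]
      exact Submodule.smul_mem _ q ha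

lemma mem_smul_top_iff_repr {N : Type} [AddCommGroup N] [Module Q N]
    {ι : Type*} (b : Module.Basis ι Q N) (J : Ideal Q) (y : N) :
    y ∈ J • (⊤ : Submodule Q N) ↔ ∀ l, b.repr y l ∈ J := by
  constructor
  · intro hy l
    refine Submodule.smul_induction_on (p := fun z => ∀ l, b.repr z l ∈ J) hy ?_ ?_ l
    · intro a ha m _ l
      simp only [map_smul, Finsupp.smul_apply, smul_eq_mul]
      exact J.mul_mem_right _ ha
    · intro u v hu hv l
      simp only [map_add, Finsupp.add_apply]
      exact J.add_mem (hu l) (hv l)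
  · intro h
    rw [← b.linearCombination_repr y, Finsupp.linearCombination_apply, Finsupp.sum]
    exact Submodule.sum_mem _ fun l _ => Submodule.smul_mem_smul (h l) trivial

lemma Jid_eq_ofList (i : ℕ) :
    Jid Q f i = Ideal.ofList ((List.ofFn f).take i) := by
  unfold Jid Ideal.ofList
  congr 1
  ext r
  simp only [Set.mem_image, Set.mem_setOf_eq, List.mem_take_iff_getElem, List.getElem_ofFn]
  constructor
  · rintro ⟨k, hk, rfl⟩
    exact ⟨(k : ℕ), by simp [Fin.is_lt]; omega, by simp⟩
  · rintro ⟨m, hm, rfl⟩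
    exact ⟨⟨m, by simp at hm; omega⟩, by simp at hm ⊢; omega, rfl⟩

lemma regular_step (hreg : RingTheory.Sequence.IsWeaklyRegular Q (List.ofFn f))
    (i : ℕ) (hi : i < c) {q : Q} (hq : f ⟨i, hi⟩ * q ∈ Jid Q f i) : q ∈ Jid Q f i := by
  have hlen : i < (List.ofFn f).length := by simpa using hi
  have h := hreg.regular_mod_prev i hlen
  have hget : (List.ofFn f)[i] = f ⟨i, hi⟩ := by simp
  rw [hget] at h
  have hq0 : Submodule.Quotient.mk
      (p := Ideal.ofList ((List.ofFn f).take i) • (⊤ : Submodule Q Q)) q = 0 := by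
    apply h (a₂ := 0)
    show f ⟨i, hi⟩ • (Submodule.Quotient.mk q) = f ⟨i, hi⟩ • (0 : _)
    rw [smul_zero, ← Submodule.Quotient.mk_smul, Submodule.Quotient.mk_eq_zero,
      Ideal.smul_eq_mul, Ideal.mul_top, ← Jid_eq_ofList, smul_eq_mul]
    exact hq
  rw [Submodule.Quotient.mk_eq_zero, Ideal.smul_eq_mul, Ideal.mul_top,
    ← Jid_eq_ofList] at hq0
  exact hq0

lemma smul_mem_free {N : Type} [AddCommGroup N] [Module Q N] [Module.Free Q N]
    (hreg : RingTheory.Sequence.IsWeaklyRegular Q (List.ofFn f))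
    (i : ℕ) (hi : i < c) {y : N} (h : f ⟨i, hi⟩ • y ∈ Jid Q f i • (⊤ : Submodule Q N)) :
    y ∈ Jid Q f i • (⊤ : Submodule Q N) := by
  let b := Module.Free.chooseBasis Q N
  rw [mem_smul_top_iff_repr b] at h ⊢
  intro l
  have hl := h l
  rw [map_smul, Finsupp.smul_apply, smul_eq_mul] at hl
  exact regular_step f hreg i hi hl

lemma keyK {N : Type} [AddCommGroup N] [Module Q N] [Module.Free Q N]
    (hreg : RingTheory.Sequence.IsWeaklyRegular Q (List.ofFn f)) :
    ∀ i, i ≤ c → ∀ y : Fin c → N, phi f N i y = 0 →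
      ∀ k : Fin c, (k : ℕ) < i → y k ∈ Jid Q f i • (⊤ : Submodule Q N) := by
  intro i
  induction i with
  | zero => intro _ y _ k hk; omega
  | succ i ih =>
    intro hi y hy k hk
    have hic : i < c := hi
    have hsplit : phi f N (i + 1) y = f ⟨i, hic⟩ • y ⟨i, hic⟩ + phi f N i y := by
      rw [phi_apply, phi_apply]
      have hins : Finset.univ.filter (fun k : Fin c => (k : ℕ) < i + 1)
          = insert (⟨i, hic⟩ : Fin c)
              (Finset.univ.filter (fun k : Fin c => (k : ℕ) < i)) := by
        ext k'
        simp only [Finset.mem_filter, Finset.mem_univ, true_and, Finset.mem_insert, Fin.ext_iff]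
        omega
      rw [hins, Finset.sum_insert (by simp)]
    have hyi : y ⟨i, hic⟩ ∈ Jid Q f i • (⊤ : Submodule Q N) := by
      apply smul_mem_free f hreg i hic
      have hneg : f ⟨i, hic⟩ • y ⟨i, hic⟩ = - phi f N i y := by
        exact eq_neg_of_add_eq_zero_left (hsplit.symm.trans hy)
      rw [hneg, ← range_phi]
      exact neg_mem ⟨y, rfl⟩
    obtain ⟨z, hz⟩ : y ⟨i, hic⟩ ∈ LinearMap.range (phi f N i) := by
      rw [range_phi]; exact hyi
    have hphiy' : phi f N i (y + f ⟨i, hic⟩ • z) = 0 := by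
      rw [map_add, map_smul, hz]
      have := hsplit.symm.trans hy
      rw [add_comm] at this
      exact this
    have hmem_i : ∀ k' : Fin c, (k' : ℕ) < i → y k' ∈ Jid Q f (i + 1) • (⊤ : Submodule Q N) := by
      intro k' hki
      have h1 := ih (le_of_lt hic) _ hphiy' k' hki
      have hrw : y k' = (y + f ⟨i, hic⟩ • z) k' - f ⟨i, hic⟩ • z k' := by
        simp
      rw [hrw]
      apply Submodule.sub_mem
      · exact Submodule.smul_mono_left (Jid_mono f (Nat.le_succ i)) h1
      · exact Submodule.smul_mem_smul
          (Ideal.subset_span ⟨⟨i, hic⟩, by simp, rfl⟩) trivial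
    rcases Nat.lt_or_ge (k : ℕ) i with h | h
    · exact hmem_i k h
    · have hkk : k = ⟨i, hic⟩ := Fin.ext (by simp only [Fin.val_mk]; omega)
      rw [hkk]
      exact Submodule.smul_mono_left (Jid_mono f (Nat.le_succ i)) hyi

lemma bigK {N : Type} [AddCommGroup N] [Module Q N] [Module.Free Q N]
    (hreg : RingTheory.Sequence.IsWeaklyRegular Q (List.ofFn f))
    (y : Fin c → N) (hy : ∑ k, f k • y k = 0) (k : Fin c) :
    y k ∈ Ispan Q f • (⊤ : Submodule Q N) := by
  have h0 : phi f N c y = 0 := by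
    rw [phi_apply, Finset.filter_true_of_mem (fun k _ => k.isLt)]
    exact hy
  have hmem := keyK f hreg c le_rfl y h0 k k.isLt
  have hJ : Jid Q f c = Ispan Q f := by
    unfold Jid Ispan
    congr 1
    ext r
    simp [Fin.is_lt]
  rwa [hJ] at hmem

lemma exists_decomp {M N : Type} [AddCommGroup M] [Module Q M]
    [AddCommGroup N] [Module Q N] (hM : Module.Projective Q M) (g : M →ₗ[Q] N)
    (hg : ∀ x : M, g x ∈ Ispan Q f • (⊤ : Submodule Q N)) :
    ∃ lam : Fin c → (M →ₗ[Q] N), ∀ x, g x = ∑ k, f k • lam k x := by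
  haveI := hM
  set φ := phi f N c with hφ
  have hJ : Jid Q f c = Ispan Q f := by
    unfold Jid Ispan
    congr 1
    ext r
    simp [Fin.is_lt]
  have hrange : ∀ x, g x ∈ LinearMap.range φ := by
    intro x; rw [hφ, range_phi, hJ]; exact hg x
  obtain ⟨h, hh⟩ := Module.projective_lifting_property φ.rangeRestrict
    (g.codRestrict (LinearMap.range φ) hrange) (LinearMap.surjective_rangeRestrict φ)
  refine ⟨fun k => (LinearMap.proj k).comp h, fun x => ?_⟩
  have hx : φ (h x) = g x := by
    have := congrArg (fun (F : M →ₗ[Q] (LinearMap.range φ)) => (F x : N)) hh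
    simpa using this
  rw [← hx, hφ, phi_apply, Finset.filter_true_of_mem (fun k _ => k.isLt)]
  rfl

end EisenbudAux2

open EisenbudAux EisenbudAux2 in
/-- post-composition with `ŝ_k` and pre-composition with `t̂_k` induce
the same action on homotopy classes of maps `C → Σʲ D`. -/
theorem eisenbud_operator_actions_agree
    (Q : Type) [CommRing Q] (c : ℕ) (f : Fin c → Q)
    (hreg : RingTheory.Sequence.IsRegular Q (List.ofFn f))
    (Ct Dt : ℤ → Type)
    [∀ n, AddCommGroup (Ct n)] [∀ n, Module Q (Ct n)]
    [∀ n, AddCommGroup (Dt n)] [∀ n, Module Q (Dt n)]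
    (hCfree : ∀ n, Module.Free Q (Ct n)) (hCfin : ∀ n, Module.Finite Q (Ct n))
    (hDfree : ∀ n, Module.Free Q (Dt n)) (hDfin : ∀ n, Module.Finite Q (Dt n))
    (dtC : ∀ n : ℤ, Ct (n + 1) →ₗ[Q] Ct n)
    (dtD : ∀ n : ℤ, Dt (n + 1) →ₗ[Q] Dt n)
    (ttC : Fin c → ∀ n : ℤ, Ct (n + 1 + 1) →ₗ[Q] Ct n)
    (ttD : Fin c → ∀ n : ℤ, Dt (n + 1 + 1) →ₗ[Q] Dt n)
    (hddC : ∀ (n : ℤ) (x : Ct (n + 1 + 1)),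
      dtC n (dtC (n + 1) x) = ∑ k, f k • ttC k n x)
    (hddD : ∀ (n : ℤ) (x : Dt (n + 1 + 1)),
      dtD n (dtD (n + 1) x) = ∑ k, f k • ttD k n x)
    (k : Fin c) (j : ℤ)
    -- a morphism `α : C → Σʲ D` of `K(R)`, given by a chain map representative
    (α : ∀ n : ℤ, (Rquot Q f ⊗[Q] Ct (n + j)) →ₗ[Rquot Q f] (Rquot Q f ⊗[Q] Dt n))
    (hα : ∀ (n : ℤ) (x : Rquot Q f ⊗[Q] Ct (n + j + 1)),
      α n ((dtC (n + j)).baseChange (Rquot Q f) x) =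
        (j.negOnePow : ℤ) •
          (dtD n).baseChange (Rquot Q f)
            (α (n + 1) (lcast Q f Ct (by omega : n + j + 1 = n + 1 + j) x))) :
    -- conclusion: `(Σʲ ŝ_k) ∘ α` and `(Σ²α) ∘ t̂_k` are homotopic as maps `C → Σ^{j+2} D`
    ∃ lam : ∀ n : ℤ,
        (Rquot Q f ⊗[Q] Ct (n + j + 1)) →ₗ[Rquot Q f] (Rquot Q f ⊗[Q] Dt n),
      ∀ (n : ℤ) (x : Rquot Q f ⊗[Q] Ct (n + j + 1 + 1)),
        (ttD k n).baseChange (Rquot Q f)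
            (α (n + 1 + 1) (lcast Q f Ct (by omega : n + j + 1 + 1 = n + 1 + 1 + j) x)) -
          α n ((ttC k (n + j)).baseChange (Rquot Q f) x) =
        (j.negOnePow : ℤ) •
            (dtD n).baseChange (Rquot Q f)
              (lam (n + 1) (lcast Q f Ct (by omega : n + j + 1 + 1 = n + 1 + j + 1) x)) +
          lam n ((dtC (n + j + 1)).baseChange (Rquot Q f) x) := by
  classical
  have hwreg := hreg.toIsWeaklyRegular
  have hprojC : ∀ n : ℤ, Module.Projective Q (Ct n) := fun n => by
    haveI := hCfree n; infer_instance
  -- Step 1: lift `α` to `Q`-linear maps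
  have hl : ∀ n : ℤ, ∃ g : Ct (n + j) →ₗ[Q] Dt n,
      g.baseChange (Rquot Q f) = α n := fun n => exists_lift (hprojC _) (α n)
  choose ta hta using hl
  -- Step 2: the chain-map relation mod `I`, decomposed along the `f k`
  have hγ : ∀ n : ℤ, ∃ lam : Fin c → (Ct (n + j + 1) →ₗ[Q] Dt n),
      ∀ x : Ct (n + j + 1),
        ta n (dtC (n + j) x)
          - (j.negOnePow : ℤ) •
              dtD n (ta (n + 1) (qcast Q Ct (by omega : n + j + 1 = n + 1 + j) x))
        = ∑ k', f k' • lam k' x := by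
    intro n
    set g : Ct (n + j + 1) →ₗ[Q] Dt n :=
      ((ta n) ∘ₗ (dtC (n + j)))
        - (j.negOnePow : ℤ) •
            ((dtD n) ∘ₗ (ta (n + 1)) ∘ₗ
              (qcast Q Ct (by omega : n + j + 1 = n + 1 + j))) with hg
    have hmem : ∀ x : Ct (n + j + 1), g x ∈ Ispan Q f • (⊤ : Submodule Q (Dt n)) := by
      intro x
      rw [← one_tmul_eq_zero_iff f]
      have h2 := hα n ((1 : Rquot Q f) ⊗ₜ[Q] x)
      rw [← hta n, ← hta (n + 1), ← baseChange_qcast f Ct] at h2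
      simp only [LinearMap.baseChange_tmul] at h2
      have hgx : (1 : Rquot Q f) ⊗ₜ[Q] (g x)
          = (1 : Rquot Q f) ⊗ₜ[Q] (ta n (dtC (n + j) x))
            - (j.negOnePow : ℤ) • ((1 : Rquot Q f) ⊗ₜ[Q]
                (dtD n (ta (n + 1)
                  (qcast Q Ct (by omega : n + j + 1 = n + 1 + j) x)))) := by
        rw [hg]
        simp only [LinearMap.sub_apply, LinearMap.comp_apply, LinearMap.smul_apply]
        rw [TensorProduct.tmul_sub, one_tmul_smul]
      rw [hgx, h2]
      exact sub_self _
    obtain ⟨lam, hlam⟩ := exists_decomp f (hprojC _) g hmem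
    refine ⟨lam, fun x => ?_⟩
    have := hlam x
    rw [hg] at this
    simpa only [LinearMap.sub_apply, LinearMap.comp_apply, LinearMap.smul_apply] using this
  choose lamt hlamt using hγ
  -- Step 3: the homotopy
  refine ⟨fun n => - ((lamt n k).baseChange (Rquot Q f)), ?_⟩
  intro n x
  have h1 : n + j + 1 + 1 = n + 1 + j + 1 := by omega
  have h4 : n + 1 + j + 1 = n + 1 + 1 + j := by omega
  have h3 : n + j + 1 = n + 1 + j := by omega
  have hee : (j.negOnePow : ℤ) * (j.negOnePow : ℤ) = 1 := by
    rw [← Units.val_mul, Int.units_mul_self, Units.val_one]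
  -- the bracket map, which is divisible by the `f k`'s
  set B : Ct (n + j + 1 + 1) →ₗ[Q] Dt n :=
    ((ta n) ∘ₗ (ttC k (n + j)))
      - ((ttD k n) ∘ₗ (ta (n + 1 + 1)) ∘ₗ (qcast Q Ct (h1.trans h4)))
      - ((lamt n k) ∘ₗ (dtC (n + j + 1)))
      - (j.negOnePow : ℤ) • ((dtD n) ∘ₗ (lamt (n + 1) k) ∘ₗ (qcast Q Ct h1)) with hB
  have hBmem : ∀ x0 : Ct (n + j + 1 + 1),
      B x0 ∈ Ispan Q f • (⊤ : Submodule Q (Dt n)) := by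
    intro x0
    haveI := hDfree n
    have hBapp : B x0 =
        ta n (ttC k (n + j) x0)
          - ttD k n (ta (n + 1 + 1) (qcast Q Ct (h1.trans h4) x0))
          - lamt n k (dtC (n + j + 1) x0)
          - (j.negOnePow : ℤ) • dtD n (lamt (n + 1) k (qcast Q Ct h1 x0)) := by
      rw [hB]
      simp only [LinearMap.sub_apply, LinearMap.comp_apply, LinearMap.smul_apply]
    rw [hBapp]
    apply bigK f hwreg (fun k' =>
      ta n (ttC k' (n + j) x0)
        - ttD k' n (ta (n + 1 + 1) (qcast Q Ct (h1.trans h4) x0))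
        - lamt n k' (dtC (n + j + 1) x0)
        - (j.negOnePow : ℤ) • dtD n (lamt (n + 1) k' (qcast Q Ct h1 x0)))
    -- the sum vanishes
    have S1 : ∑ k', f k' • ta n (ttC k' (n + j) x0)
        = ta n (dtC (n + j) (dtC (n + j + 1) x0)) := by
      rw [hddC (n + j) x0, map_sum]
      simp_rw [map_smul]
    have S2 : ∑ k', f k' • ttD k' n (ta (n + 1 + 1) (qcast Q Ct (h1.trans h4) x0))
        = dtD n (dtD (n + 1) (ta (n + 1 + 1) (qcast Q Ct (h1.trans h4) x0))) := by
      rw [hddD]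
    have S3 : ∑ k', f k' • lamt n k' (dtC (n + j + 1) x0)
        = ta n (dtC (n + j) (dtC (n + j + 1) x0))
          - (j.negOnePow : ℤ) •
              dtD n (ta (n + 1) (qcast Q Ct h3 (dtC (n + j + 1) x0))) := by
      have h := (hlamt n (dtC (n + j + 1) x0)).symm
      exact h
    have S4 : ∑ k', f k' •
          ((j.negOnePow : ℤ) • dtD n (lamt (n + 1) k' (qcast Q Ct h1 x0)))
        = (j.negOnePow : ℤ) • dtD n
            (ta (n + 1) (dtC (n + 1 + j) (qcast Q Ct h1 x0))
              - (j.negOnePow : ℤ) •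
                  dtD (n + 1) (ta (n + 1 + 1)
                    (qcast Q Ct h4 (qcast Q Ct h1 x0)))) := by
      have hstep : ∀ k' : Fin c,
          f k' • ((j.negOnePow : ℤ) • dtD n (lamt (n + 1) k' (qcast Q Ct h1 x0)))
            = (j.negOnePow : ℤ) • dtD n (f k' • lamt (n + 1) k' (qcast Q Ct h1 x0)) := by
        intro k'
        rw [map_smul, smul_comm]
      rw [Finset.sum_congr rfl (fun k' _ => hstep k')]
      rw [← Finset.smul_sum, ← map_sum]
      congr 2
      exact (hlamt (n + 1) (qcast Q Ct h1 x0)).symm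
    have hnat : qcast Q Ct h3 (dtC (n + j + 1) x0)
        = dtC (n + 1 + j) (qcast Q Ct h1 x0) := qcast_natural dtC h3 h1 x0
    calc ∑ k', f k' • (ta n (ttC k' (n + j) x0)
            - ttD k' n (ta (n + 1 + 1) (qcast Q Ct (h1.trans h4) x0))
            - lamt n k' (dtC (n + j + 1) x0)
            - (j.negOnePow : ℤ) • dtD n (lamt (n + 1) k' (qcast Q Ct h1 x0)))
        = (∑ k', f k' • ta n (ttC k' (n + j) x0))
          - (∑ k', f k' • ttD k' n (ta (n + 1 + 1) (qcast Q Ct (h1.trans h4) x0)))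
          - (∑ k', f k' • lamt n k' (dtC (n + j + 1) x0))
          - (∑ k', f k' •
              ((j.negOnePow : ℤ) • dtD n (lamt (n + 1) k' (qcast Q Ct h1 x0)))) := by
          simp_rw [smul_sub, Finset.sum_sub_distrib]
      _ = 0 := by
          rw [S1, S2, S3, S4, hnat]
          rw [map_sub, map_zsmul, smul_sub, smul_smul, hee, one_smul,
            qcast_qcast]
          abel
  have hBz : B.baseChange (Rquot Q f) = 0 := baseChange_eq_zero_of_mem B hBmem
  -- expand the base change of `B`
  have hexp : B.baseChange (Rquot Q f) =
      (((ta n).baseChange (Rquot Q f)) ∘ₗ ((ttC k (n + j)).baseChange (Rquot Q f)))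
        - (((ttD k n).baseChange (Rquot Q f)) ∘ₗ
            ((ta (n + 1 + 1)).baseChange (Rquot Q f)) ∘ₗ
            ((qcast Q Ct (h1.trans h4)).baseChange (Rquot Q f)))
        - (((lamt n k).baseChange (Rquot Q f)) ∘ₗ
            ((dtC (n + j + 1)).baseChange (Rquot Q f)))
        - (j.negOnePow : ℤ) •
            (((dtD n).baseChange (Rquot Q f)) ∘ₗ
              ((lamt (n + 1) k).baseChange (Rquot Q f)) ∘ₗ
              ((qcast Q Ct h1).baseChange (Rquot Q f))) := by
    apply rext
    intro x0
    rw [LinearMap.baseChange_tmul]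
    rw [hB]
    simp only [LinearMap.sub_apply, LinearMap.comp_apply, LinearMap.smul_apply]
    rw [TensorProduct.tmul_sub, TensorProduct.tmul_sub, TensorProduct.tmul_sub,
      one_tmul_smul]
    simp only [LinearMap.baseChange_tmul]
  rw [hexp] at hBz
  have hXX := DFunLike.congr_fun hBz x
  simp only [LinearMap.sub_apply, LinearMap.comp_apply, LinearMap.smul_apply,
    LinearMap.zero_apply] at hXX
  -- now massage the goal into the same shape
  rw [← hta n, ← hta (n + 1 + 1)]
  simp only [← baseChange_qcast f Ct]
  show (ttD k n).baseChange (Rquot Q f)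
        ((ta (n + 1 + 1)).baseChange (Rquot Q f)
          ((qcast Q Ct (h1.trans h4)).baseChange (Rquot Q f) x))
      - (ta n).baseChange (Rquot Q f) ((ttC k (n + j)).baseChange (Rquot Q f) x)
    = (j.negOnePow : ℤ) •
        (dtD n).baseChange (Rquot Q f)
          ((- ((lamt (n + 1) k).baseChange (Rquot Q f)))
            ((qcast Q Ct h1).baseChange (Rquot Q f) x))
      + (- ((lamt n k).baseChange (Rquot Q f)))
          ((dtC (n + j + 1)).baseChange (Rquot Q f) x)
  simp only [LinearMap.neg_apply, map_neg, smul_neg]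
  set A1 := (ta n).baseChange (Rquot Q f) ((ttC k (n + j)).baseChange (Rquot Q f) x)
    with hA1
  set A2 := (ttD k n).baseChange (Rquot Q f)
      ((ta (n + 1 + 1)).baseChange (Rquot Q f)
        ((qcast Q Ct (h1.trans h4)).baseChange (Rquot Q f) x)) with hA2
  set A3 := (lamt n k).baseChange (Rquot Q f)
      ((dtC (n + j + 1)).baseChange (Rquot Q f) x) with hA3
  set A4 := (dtD n).baseChange (Rquot Q f)
      ((lamt (n + 1) k).baseChange (Rquot Q f)
        ((qcast Q Ct h1).baseChange (Rquot Q f) x)) with hA4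
  -- hXX : A1 - A2 - A3 - e • A4 = 0
  calc A2 - A1
      = -(A1 - A2 - A3 - (j.negOnePow : ℤ) • A4)
          - A3 - (j.negOnePow : ℤ) • A4 := by abel
    _ = -(0 : Rquot Q f ⊗[Q] Dt n) - A3 - (j.negOnePow : ℤ) • A4 := by rw [hXX]
    _ = -((j.negOnePow : ℤ) • A4) + -A3 := by abel
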